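/- Let 𝒞 be a class of graphs that is weakly sparse with parameter t₀ (no member contains K_{t₀,t₀} as a subgraph, and assume t₀²+t₀−2 ≥ 8t₀) and strongly flip-flat with flip-number k (for every r there is N_r : ℕ → ℕ such that any G ∈ 𝒞 and A ⊆ V(G) with |A| ≥ N_r(m) admits a set of at most k flips ℱ and B ⊆ A, |B| ≥ m, with B r-independent in G ⊕ ℱ). Then 𝒞 is uniformly almost-wide with constant s = k(t₀²+t₀−2): for every r there is a function N'_r such that any G ∈ 𝒞 and A ⊆ V(G) with |A| ≥ N'_r(m) admits S ⊆ V(G), |S| ≤ k(t₀²+t₀−2), and B ⊆ A, |B| ≥ m, with B r-independent in G \ S. -/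

import Mathlib

/-- The flip of a graph `G` on a pair of vertex sets `(A, B)`. -/
def gflip {V : Type*} (G : SimpleGraph V) (A B : Set V) : SimpleGraph V where
  Adj u v := u ≠ v ∧ Xor' (G.Adj u v) ((u ∈ A ∧ v ∈ B) ∨ (u ∈ B ∧ v ∈ A))
  symm := by
    constructor
    intro u v hx
    obtain ⟨h, hx⟩ := hx
    refine ⟨h.symm, ?_⟩
    have hGA : G.Adj v u ↔ G.Adj u v := ⟨fun h => h.symm, fun h => h.symm⟩
    simp only [Xor', xor_def] at *
    tauto
  loopless := by constructor; intro v hx; exact hx.1 rfl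

/-- Applying a list of flips to `G`. -/
def gflipAll {V : Type*} (G : SimpleGraph V) (L : List (Set V × Set V)) : SimpleGraph V :=
  L.foldl (fun H F => gflip H F.1 F.2) G

/-- `B` is `r`-independent in `H`. -/
def RIndep {V : Type*} (H : SimpleGraph V) (r : ℕ) (B : Set V) : Prop :=
  ∀ u ∈ B, ∀ v ∈ B, u ≠ v → ∀ p : H.Walk u v, r < p.length

/-- `B` is `r`-independent in `G \ S`. -/
def RIndepAvoid {V : Type*} (G : SimpleGraph V) (r : ℕ) (S B : Set V) : Prop :=
  ∀ u ∈ B, ∀ v ∈ B, u ≠ v → ∀ p : G.Walk u v,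
    (∀ w ∈ p.support, w ∉ S) → r < p.length

/-- `G` contains `K_{t,t}` as a subgraph. -/
def HasBiclique {V : Type*} (G : SimpleGraph V) (t : ℕ) : Prop :=
  ∃ X Y : Finset V, Disjoint X Y ∧ X.card = t ∧ Y.card = t ∧
    ∀ x ∈ X, ∀ y ∈ Y, G.Adj x y

/-- A class of (finite) graphs `C` is uniformly almost-wide with separator-size constant
`s` and margin functions `N r`: for every radius `r`, size `m`, graph `G ∈ C`, and
`A ⊆ V(G)` with `|A| ≥ N r m`, there are `S` with `|S| ≤ s` and `B ⊆ A` with `|B| ≥ m`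
such that `B` is `r`-independent in `G \ S`. -/
def UAW (C : ∀ n : ℕ, SimpleGraph (Fin n) → Prop) (s : ℕ) (N : ℕ → ℕ → ℕ) : Prop :=
  ∀ (r m n : ℕ) (G : SimpleGraph (Fin n)), C n G →
    ∀ A : Finset (Fin n), N r m ≤ A.card →
      ∃ S : Finset (Fin n), S.card ≤ s ∧
        ∃ B ⊆ A, m ≤ B.card ∧ Disjoint B S ∧ RIndepAvoid G r ↑S ↑B

/-- A class of (finite) graphs `C` is strongly flip-flat with flip-number `s` and margin
functions `N r`: for every radius `r`, size `m`, graph `G ∈ C`, and `A ⊆ V(G)` with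
`|A| ≥ N r m`, there are a set of at most `s` flips `ℱ` and `B ⊆ A` with `|B| ≥ m`
such that `B` is `r`-independent in `G ⊕ ℱ`. -/
def SFF (C : ∀ n : ℕ, SimpleGraph (Fin n) → Prop) (s : ℕ) (N : ℕ → ℕ → ℕ) : Prop :=
  ∀ (r m n : ℕ) (G : SimpleGraph (Fin n)), C n G →
    ∀ A : Finset (Fin n), N r m ≤ A.card →
      ∃ L : List (Set (Fin n) × Set (Fin n)), L.length ≤ s ∧
        ∃ B ⊆ A, m ≤ B.card ∧ RIndep (gflipAll G L) r ↑B


/-- Two-colour Ramsey numbers. -/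
def ram : ℕ → ℕ → ℕ
  | 0, _ => 0
  | _ + 1, 0 => 0
  | a + 1, b + 1 => ram a (b + 1) + ram (a + 1) b + 1

theorem ram_spec {α : Type*} [DecidableEq α] :
    ∀ (a b : ℕ) (s : Finset α) (Cl : α → α → Prop),
      (∀ x y, Cl x y → Cl y x) →
      ram a b ≤ s.card →
      (∃ T ⊆ s, a ≤ T.card ∧ ∀ u ∈ T, ∀ v ∈ T, u ≠ v → Cl u v) ∨
      (∃ T ⊆ s, b ≤ T.card ∧ ∀ u ∈ T, ∀ v ∈ T, u ≠ v → ¬ Cl u v) := by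
  intro a
  induction a with
  | zero =>
    intro b s Cl _ _
    exact Or.inl ⟨∅, Finset.empty_subset s, by simp⟩
  | succ a iha =>
    intro b
    induction b with
    | zero =>
      intro s Cl _ _
      exact Or.inr ⟨∅, Finset.empty_subset s, by simp⟩
    | succ b ihb =>
      intro s Cl hsym hcard
      classical
      have hram : ram (a+1) (b+1) = ram a (b+1) + ram (a+1) b + 1 := by simp [ram]
      have hpos : 0 < s.card := by omega
      obtain ⟨x, hx⟩ := Finset.card_pos.mp hpos
      set s' := s.erase x with hs'
      have hcard' : s'.card = s.card - 1 := Finset.card_erase_of_mem hx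
      set P := s'.filter (fun y => Cl x y) with hP
      set Q := s'.filter (fun y => ¬ Cl x y) with hQ
      have hPQ : P.card + Q.card = s'.card := Finset.card_filter_add_card_filter_not _
      have hsplit : ram a (b+1) ≤ P.card ∨ ram (a+1) b ≤ Q.card := by omega
      rcases hsplit with h | h
      · rcases iha (b+1) P Cl hsym h with ⟨T, hT, hTc, hTp⟩ | ⟨T, hT, hTc, hTp⟩
        · refine Or.inl ⟨insert x T, ?_, ?_, ?_⟩
          · intro y hy
            rcases Finset.mem_insert.mp hy with rfl | hy
            · exact hx
            · exact (Finset.erase_subset _ _) ((Finset.filter_subset _ _) (hT hy))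
          · have hxT : x ∉ T := by
              intro hxT
              have := (Finset.mem_filter.mp (hT hxT)).1
              exact (Finset.notMem_erase x s) this
            rw [Finset.card_insert_of_notMem hxT]; omega
          · intro u hu v hv huv
            rcases Finset.mem_insert.mp hu with hue | hu <;>
              rcases Finset.mem_insert.mp hv with hve | hv
            · exact absurd (hue.trans hve.symm) huv
            · rw [hue]; exact (Finset.mem_filter.mp (hT hv)).2
            · rw [hve]; exact hsym _ _ (Finset.mem_filter.mp (hT hu)).2
            · exact hTp u hu v hv huv
        · exact Or.inr ⟨T, hT.trans ((Finset.filter_subset _ _).trans (Finset.erase_subset _ _)), hTc, hTp⟩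
      · rcases ihb Q Cl hsym h with ⟨T, hT, hTc, hTp⟩ | ⟨T, hT, hTc, hTp⟩
        · exact Or.inl ⟨T, hT.trans ((Finset.filter_subset _ _).trans (Finset.erase_subset _ _)), hTc, hTp⟩
        · refine Or.inr ⟨insert x T, ?_, ?_, ?_⟩
          · intro y hy
            rcases Finset.mem_insert.mp hy with rfl | hy
            · exact hx
            · exact (Finset.erase_subset _ _) ((Finset.filter_subset _ _) (hT hy))
          · have hxT : x ∉ T := by
              intro hxT
              have := (Finset.mem_filter.mp (hT hxT)).1
              exact (Finset.notMem_erase x s) this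
            rw [Finset.card_insert_of_notMem hxT]; omega
          · intro u hu v hv huv
            rcases Finset.mem_insert.mp hu with hue | hu <;>
              rcases Finset.mem_insert.mp hv with hve | hv
            · exact absurd (hue.trans hve.symm) huv
            · rw [hue]; exact (Finset.mem_filter.mp (hT hv)).2
            · rw [hve]; exact fun hc => (Finset.mem_filter.mp (hT hu)).2 (hsym _ _ hc)
            · exact hTp u hu v hv huv

section Walks

variable {V : Type*} {K G H : SimpleGraph V} {S : Finset V} {u v w : V}

/-- There is a walk from `u` to `v` in `K` of length at most `ℓ` avoiding `S`. -/
def Reach (K : SimpleGraph V) (S : Finset V) (u v : V) (ℓ : ℕ) : Prop :=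
  ∃ p : K.Walk u v, (∀ x ∈ p.support, x ∉ S) ∧ p.length ≤ ℓ

lemma Reach.mono_len {ℓ ℓ' : ℕ} (h : Reach K S u v ℓ) (hle : ℓ ≤ ℓ') : Reach K S u v ℓ' := by
  obtain ⟨p, hp, hl⟩ := h; exact ⟨p, hp, hl.trans hle⟩

lemma Reach.anti_set {S' : Finset V} (hss : S' ⊆ S) {ℓ : ℕ} (h : Reach K S u v ℓ) :
    Reach K S' u v ℓ := by
  obtain ⟨p, hp, hl⟩ := h; exact ⟨p, fun x hx hxS => hp x hx (hss hxS), hl⟩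

lemma reach_refl (hu : u ∉ S) : Reach K S u u 0 :=
  ⟨SimpleGraph.Walk.nil, by simpa using hu, by simp⟩

lemma Reach.symm {ℓ : ℕ} (h : Reach K S u v ℓ) : Reach K S v u ℓ := by
  obtain ⟨p, hp, hl⟩ := h
  exact ⟨p.reverse, fun x hx => hp x (by simpa using hx), by simpa using hl⟩

lemma Reach.trans {ℓ₁ ℓ₂ : ℕ} (h₁ : Reach K S u v ℓ₁) (h₂ : Reach K S v w ℓ₂) :
    Reach K S u w (ℓ₁ + ℓ₂) := by
  obtain ⟨p, hp, hl⟩ := h₁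
  obtain ⟨q, hq, hl'⟩ := h₂
  refine ⟨p.append q, ?_, ?_⟩
  · intro x hx
    rw [SimpleGraph.Walk.mem_support_append_iff] at hx
    rcases hx with hx | hx
    · exact hp x hx
    · exact hq x hx
  · rw [SimpleGraph.Walk.length_append]; omega

lemma reach_adj (h : K.Adj u v) (hu : u ∉ S) (hv : v ∉ S) : Reach K S u v 1 :=
  ⟨SimpleGraph.Walk.cons h SimpleGraph.Walk.nil, by
    intro x hx
    simp only [SimpleGraph.Walk.support_cons, SimpleGraph.Walk.support_nil,
      List.mem_cons] at hx
    rcases hx with rfl | hx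
    · exact hu
    · rcases hx with rfl | hx
      · exact hv
      · simp at hx, by simp⟩

/-- The pair `(a,b)` is toggled between `G` and `H`. -/
def Rtog (G H : SimpleGraph V) (a b : V) : Prop :=
  a ≠ b ∧ ¬ (G.Adj a b ↔ H.Adj a b)

/-- Either a `G`-walk avoiding `S` transfers to an `H`-walk, or it meets a toggled pair,
whose near endpoint is `H`-reachable. -/
lemma walk_split (p : G.Walk u v) (hsupp : ∀ x ∈ p.support, x ∉ S) :
    (∃ q : H.Walk u v, (∀ x ∈ q.support, x ∉ S) ∧ q.length ≤ p.length) ∨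
    (∃ a b, Rtog G H a b ∧ a ∉ S ∧ b ∉ S ∧
      ∃ j, Reach H S u a j ∧ j + 1 ≤ p.length) := by
  induction p with
  | nil => exact Or.inl ⟨SimpleGraph.Walk.nil, by simpa using hsupp, le_refl _⟩
  | @cons u w v h p ih =>
    have hu : u ∉ S := hsupp u (by simp)
    have hw : w ∉ S := hsupp w (by simp)
    by_cases hH : H.Adj u w
    · have hsupp' : ∀ x ∈ p.support, x ∉ S := by
        intro x hx; exact hsupp x (by simp [hx])
      rcases ih hsupp' with ⟨q, hq, hl⟩ | ⟨a, b, htog, haS, hbS, j, hr, hj⟩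
      · refine Or.inl ⟨SimpleGraph.Walk.cons hH q, ?_, by simp; omega⟩
        intro x hx
        simp only [SimpleGraph.Walk.support_cons, List.mem_cons] at hx
        rcases hx with rfl | hx
        · exact hu
        · exact hq x hx
      · refine Or.inr ⟨a, b, htog, haS, hbS, j + 1, ?_, by simp; omega⟩
        have := (reach_adj hH hu hw).trans hr
        simpa [Nat.add_comm] using this
    · refine Or.inr ⟨u, w, ⟨h.ne, fun hiff => hH (hiff.mp h)⟩, hu, hw, 0, reach_refl hu, by simp⟩

lemma walk_transfer_aux (hagree : ∀ a b, a ∉ S → b ∉ S → a ≠ b → (G.Adj a b ↔ H.Adj a b))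
    (p : G.Walk u v) (hp : ∀ x ∈ p.support, x ∉ S) :
    ∃ q : H.Walk u v, (∀ x ∈ q.support, x ∉ S) ∧ q.length ≤ p.length := by
  induction p with
  | nil => exact ⟨SimpleGraph.Walk.nil, by simpa using hp, le_refl _⟩
  | @cons u w v h p ih =>
    have hu : u ∉ S := hp u (by simp)
    have hw : w ∉ S := hp w (by simp)
    have hp' : ∀ x ∈ p.support, x ∉ S := fun x hx => hp x (by simp [hx])
    obtain ⟨q, hq, hql⟩ := ih hp'
    refine ⟨SimpleGraph.Walk.cons ((hagree u w hu hw h.ne).mp h) q, ?_, ?_⟩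
    · intro x hx
      simp only [SimpleGraph.Walk.support_cons, List.mem_cons] at hx
      rcases hx with rfl | hx
      · exact hu
      · exact hq x hx
    · simp; omega

/-- If `G` and `H` agree off `S`, `G`-walks avoiding `S` transfer to `H`. -/
lemma walk_transfer (hagree : ∀ a b, a ∉ S → b ∉ S → a ≠ b → (G.Adj a b ↔ H.Adj a b))
    {ℓ : ℕ} (h : Reach G S u v ℓ) : Reach H S u v ℓ := by
  obtain ⟨p, hp, hl⟩ := h
  obtain ⟨q, hq, hql⟩ := walk_transfer_aux hagree p hp
  exact ⟨q, hq, hql.trans hl⟩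

end Walks

section Lin

open Module Submodule

variable {V : Type*} [Fintype V] [DecidableEq V]

/-- The rank of a square `ZMod 2` matrix given as the dimension of its row space. -/
noncomputable def mu (M : V → V → ZMod 2) : ℕ :=
  Module.finrank (ZMod 2) (Submodule.span (ZMod 2) (Set.range M))

lemma mu_le_of_rows_le {M : V → V → ZMod 2} {W : Submodule (ZMod 2) (V → ZMod 2)}
    (h : ∀ p, M p ∈ W) : mu M ≤ Module.finrank (ZMod 2) W := by
  apply Submodule.finrank_mono
  rw [Submodule.span_le]
  rintro x ⟨p, rfl⟩
  exact h p

lemma mu_add_le (M N : V → V → ZMod 2) : mu (M + N) ≤ mu M + mu N := by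
  have h1 : mu (M + N) ≤ Module.finrank (ZMod 2)
      ↥(Submodule.span (ZMod 2) (Set.range M) ⊔ Submodule.span (ZMod 2) (Set.range N)) := by
    apply mu_le_of_rows_le
    intro p
    exact Submodule.add_mem _
      (Submodule.mem_sup_left (Submodule.subset_span ⟨p, rfl⟩))
      (Submodule.mem_sup_right (Submodule.subset_span ⟨p, rfl⟩))
  refine h1.trans ?_
  have h2 := Submodule.finrank_sup_add_finrank_inf_eq
    (Submodule.span (ZMod 2) (Set.range M)) (Submodule.span (ZMod 2) (Set.range N))
  have e1 : mu M = Module.finrank (ZMod 2) ↥(Submodule.span (ZMod 2) (Set.range M)) := rfl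
  have e2 : mu N = Module.finrank (ZMod 2) ↥(Submodule.span (ZMod 2) (Set.range N)) := rfl
  omega

lemma mu_atom_le (x y z : V → ZMod 2) :
    mu (fun p q => x p * y q + y p * x q + z p * z q) ≤ 3 := by
  classical
  have h : mu (fun p q => x p * y q + y p * x q + z p * z q) ≤
      Module.finrank (ZMod 2) (Submodule.span (ZMod 2) ({y, x, z} : Set (V → ZMod 2))) := by
    apply mu_le_of_rows_le
    intro p
    have : (fun q => x p * y q + y p * x q + z p * z q) =
        x p • y + y p • x + z p • z := by
      funext q; simp [mul_comm]
    rw [this]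
    refine Submodule.add_mem _ (Submodule.add_mem _ ?_ ?_) ?_ <;>
      exact Submodule.smul_mem _ _ (Submodule.subset_span (by simp))
  refine h.trans ?_
  refine (finrank_span_le_card _).trans ?_
  have : ({y, x, z} : Set (V → ZMod 2)).toFinset ⊆ {y, x, z} := by
    intro a ha; simpa using ha
  calc ({y, x, z} : Set (V → ZMod 2)).toFinset.card ≤ ({y, x, z} : Finset (V → ZMod 2)).card :=
        Finset.card_le_card this
    _ ≤ 3 := by
        refine (Finset.card_insert_le _ _).trans ?_
        simp [Finset.card_insert_le]
        exact Nat.lt_succ_of_le ((Finset.card_insert_le _ _).trans (by simp))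

lemma mu_zero_rows {M : V → V → ZMod 2} (h : mu M = 0) : ∀ p, M p = 0 := by
  have : Submodule.span (ZMod 2) (Set.range M) = ⊥ := by
    rwa [← Submodule.finrank_eq_zero (S := Submodule.span (ZMod 2) (Set.range M))]
  intro p
  have hp : M p ∈ Submodule.span (ZMod 2) (Set.range M) :=
    Submodule.subset_span ⟨p, rfl⟩
  rw [this] at hp
  simpa using hp

/-- Number of distinct rows is at most `2 ^ mu M`. -/
lemma card_rows_le {M : V → V → ZMod 2} (D : Finset (V → ZMod 2))
    (hD : ∀ x ∈ D, ∃ p, M p = x) : D.card ≤ 2 ^ mu M := by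
  classical
  set W := Submodule.span (ZMod 2) (Set.range M) with hW
  have hmem : ∀ x ∈ D, x ∈ (W : Set (V → ZMod 2)) := by
    intro x hx
    obtain ⟨p, rfl⟩ := hD x hx
    exact Submodule.subset_span ⟨p, rfl⟩
  have hfin : (W : Set (V → ZMod 2)).Finite := Set.toFinite _
  have hsub : D ⊆ hfin.toFinset := by
    intro x hx; rw [Set.Finite.mem_toFinset]; exact hmem x hx
  refine (Finset.card_le_card hsub).trans ?_
  rw [Set.Finite.card_toFinset]
  have hcard : Fintype.card (W : Set (V → ZMod 2)) = 2 ^ Module.finrank (ZMod 2) ↥W := by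
    have := card_eq_pow_finrank (K := ZMod 2) (V := ↥W)
    simpa using this
  have : mu M = Module.finrank (ZMod 2) ↥W := rfl
  rw [this]
  convert le_of_eq hcard using 2

/-- Key rank-drop lemma: zeroing out the rows and columns of `S`, where `S` contains a
vertex `c` with nonzero row supported in `S`, drops `mu` by at least one. -/
lemma mu_drop (M : V → V → ZMod 2) (S : Finset V) (c : V) (hc : c ∈ S)
    (hsupp : ∀ v, v ∉ S → M c v = 0) (hnz : M c ≠ 0) :
    mu (fun p q => if p ∈ S ∨ q ∈ S then 0 else M p q) + 1 ≤ mu M := by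
  classical
  -- the coordinate-zeroing linear map
  set ζ : (V → ZMod 2) →ₗ[ZMod 2] (V → ZMod 2) :=
    { toFun := fun f v => if v ∈ S then 0 else f v
      map_add' := by intro f g; funext v; by_cases h : v ∈ S <;> simp [h]
      map_smul' := by intro a f; funext v; by_cases h : v ∈ S <;> simp [h] } with hζ
  set K : Submodule (ZMod 2) (V → ZMod 2) := Submodule.span (ZMod 2) (Set.range M) with hK
  have hMc : M c ∈ K := Submodule.subset_span ⟨c, rfl⟩
  set φ : K →ₗ[ZMod 2] (V → ZMod 2) := ζ.comp K.subtype with hφ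
  -- rows of the zeroed matrix are in the range of φ
  have hrows : ∀ p, (fun q => if p ∈ S ∨ q ∈ S then (0 : ZMod 2) else M p q) ∈ LinearMap.range φ := by
    intro p
    by_cases hp : p ∈ S
    · refine ⟨0, ?_⟩
      simp only [map_zero]
      funext q; simp [hp]
    · refine ⟨⟨M p, Submodule.subset_span ⟨p, rfl⟩⟩, ?_⟩
      funext q
      simp only [hφ, LinearMap.comp_apply, Submodule.coe_subtype, hζ]
      by_cases hq : q ∈ S <;> simp [hq, hp]
  have h1 : mu (fun p q => if p ∈ S ∨ q ∈ S then 0 else M p q) ≤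
      Module.finrank (ZMod 2) (LinearMap.range φ) := mu_le_of_rows_le hrows
  -- kernel of φ is nontrivial
  have hker : (⟨M c, hMc⟩ : K) ∈ LinearMap.ker φ := by
    simp only [LinearMap.mem_ker, hφ, LinearMap.comp_apply, Submodule.coe_subtype, hζ]
    funext v
    by_cases hv : v ∈ S
    · simp [hv]
    · simp [hv, hsupp v hv]
  have hker_nz : (⟨M c, hMc⟩ : K) ≠ 0 := by
    intro h
    apply hnz
    exact congrArg Subtype.val h
  have hkpos : 0 < Module.finrank (ZMod 2) (LinearMap.ker φ) := by
    rw [Module.finrank_pos_iff]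
    exact nontrivial_of_ne ⟨⟨M c, hMc⟩, hker⟩ 0 (by simp [hker_nz])
  have hrn : Module.finrank (ZMod 2) (LinearMap.range φ) + Module.finrank (ZMod 2) (LinearMap.ker φ) =
      Module.finrank (ZMod 2) K := LinearMap.finrank_range_add_finrank_ker φ
  have : Module.finrank (ZMod 2) K = mu M := rfl
  omega

end Lin

section Bridge

open scoped Classical

variable {V : Type*} [Fintype V] [DecidableEq V]

/-- `Prop` indicator with values in `ZMod 2`. -/
noncomputable def indP (P : Prop) : ZMod 2 := if P then 1 else 0

/-- indicator of a set -/
noncomputable def indS (A : Set V) : V → ZMod 2 := fun v => indP (v ∈ A)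

/-- The toggle matrix of a single flip. -/
noncomputable def Tmat (F : Set V × Set V) : V → V → ZMod 2 := fun p q =>
  indS F.1 p * indS F.2 q + indS F.2 p * indS F.1 q +
    indS (F.1 ∩ F.2) p * indS (F.1 ∩ F.2) q

lemma Tmat_symm (F : Set V × Set V) (p q : V) : Tmat F p q = Tmat F q p := by
  unfold Tmat; ring

lemma mu_Tmat_le (F : Set V × Set V) : mu (Tmat F) ≤ 3 := mu_atom_le _ _ _

/-- toggle additivity along composition -/
lemma indP_tog_chain (G H K : SimpleGraph V) (p q : V) (hpq : p ≠ q) :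
    indP (Rtog G K p q) = indP (Rtog G H p q) + indP (Rtog H K p q) := by
  by_cases h1 : G.Adj p q <;> by_cases h2 : H.Adj p q <;> by_cases h3 : K.Adj p q <;>
    simp [indP, Rtog, h1, h2, h3, hpq] <;> decide

lemma Tmat_spec (G : SimpleGraph V) (F : Set V × Set V) (p q : V) (hpq : p ≠ q) :
    Tmat F p q = indP (Rtog G (gflip G F.1 F.2) p q) := by
  have hR : Rtog G (gflip G F.1 F.2) p q ↔
      ((p ∈ F.1 ∧ q ∈ F.2) ∨ (p ∈ F.2 ∧ q ∈ F.1)) := by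
    constructor
    · rintro ⟨-, hniff⟩
      by_contra hcr
      exact hniff (by
        constructor
        · intro hG; exact ⟨hpq, Or.inl ⟨hG, hcr⟩⟩
        · rintro ⟨-, hx⟩
          rcases hx with ⟨hG, -⟩ | ⟨hc, -⟩
          · exact hG
          · exact absurd hc hcr)
    · intro hcr
      refine ⟨hpq, fun hiff => ?_⟩
      by_cases hG : G.Adj p q
      · have : (gflip G F.1 F.2).Adj p q := hiff.mp hG
        rcases this.2 with ⟨-, hnc⟩ | ⟨-, hnG⟩
        · exact hnc hcr
        · exact hnG hG
      · have : ¬ (gflip G F.1 F.2).Adj p q := fun h => by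
          rcases h.2 with ⟨hG', -⟩ | ⟨-, -⟩
          · exact hG hG'
          · exact hG (hiff.mpr h)
        exact this ⟨hpq, Or.inr ⟨hcr, hG⟩⟩
  rw [hR]
  by_cases h1 : p ∈ F.1 <;> by_cases h2 : p ∈ F.2 <;>
    by_cases h3 : q ∈ F.1 <;> by_cases h4 : q ∈ F.2 <;>
    simp [Tmat, indS, indP, h1, h2, h3, h4] <;> decide

/-- Sum of toggle matrices over a list of flips. -/
noncomputable def sumT : List (Set V × Set V) → (V → V → ZMod 2)
  | [] => 0
  | F :: L => Tmat F + sumT L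

lemma sumT_symm (L : List (Set V × Set V)) (p q : V) : sumT L p q = sumT L q p := by
  induction L with
  | nil => rfl
  | cons F L ih => simp [sumT, Tmat_symm F p q, ih]

lemma mu_sumT_le (L : List (Set V × Set V)) : mu (sumT L) ≤ 3 * L.length := by
  induction L with
  | nil =>
    have : mu (sumT ([] : List (Set V × Set V))) ≤ 0 := by
      have h := mu_le_of_rows_le (M := sumT ([] : List (Set V × Set V))) (W := ⊥)
        (by intro p; simp [sumT])
      simpa [finrank_bot] using h
    simpa using this
  | cons F L ih =>
    have := (mu_add_le (Tmat F) (sumT L)).trans (Nat.add_le_add (mu_Tmat_le F) ih)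
    calc mu (sumT (F :: L)) = mu (Tmat F + sumT L) := rfl
      _ ≤ 3 + 3 * L.length := this
      _ ≤ 3 * (F :: L).length := by simp [List.length_cons]; ring_nf; omega

lemma gflipAll_cons (G : SimpleGraph V) (F : Set V × Set V) (L : List (Set V × Set V)) :
    gflipAll G (F :: L) = gflipAll (gflip G F.1 F.2) L := rfl

lemma sumT_spec (L : List (Set V × Set V)) : ∀ (G : SimpleGraph V) (p q : V), p ≠ q →
    sumT L p q = indP (Rtog G (gflipAll G L) p q) := by
  induction L with
  | nil =>
    intro G p q hpq
    simp [sumT, gflipAll, indP, Rtog]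
  | cons F L ih =>
    intro G p q hpq
    rw [gflipAll_cons, indP_tog_chain G (gflip G F.1 F.2) (gflipAll (gflip G F.1 F.2) L) p q hpq]
    have h1 := Tmat_spec G F p q hpq
    have h2 := ih (gflip G F.1 F.2) p q hpq
    calc sumT (F :: L) p q = Tmat F p q + sumT L p q := rfl
      _ = _ := by rw [h1, h2]

end Bridge

section Core

open scoped Classical

lemma zmod2_cases (x : ZMod 2) : x = 0 ∨ x = 1 := by fin_cases x; exact Or.inl rfl; exact Or.inr rfl

lemma indP_eq_one {P : Prop} : indP P = 1 ↔ P := by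
  by_cases h : P <;> simp [indP, h]

lemma indP_eq_zero {P : Prop} : indP P = 0 ↔ ¬ P := by
  by_cases h : P <;> simp [indP, h]

lemma indP_congr {P Q : Prop} (h : P ↔ Q) : indP P = indP Q := by
  simp only [indP, h]

/-- The margin function for the core induction. -/
def fN (t₀ : ℕ) : ℕ → ℕ → ℕ
  | 0, m => m
  | s + 1, m => max (ram ((2 * t₀ - 1) * 2 ^ (s + 1) + 1) m) (fN t₀ s m + t₀)

theorem core {n : ℕ} (G H : SimpleGraph (Fin n)) (t₀ r : ℕ) (ht8 : 8 ≤ t₀)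
    (hbic : ¬ HasBiclique G t₀) :
    ∀ (s m : ℕ) (S₀ B : Finset (Fin n)) (M : Fin n → Fin n → ZMod 2),
      (∀ p q, M p q = M q p) →
      (∀ p q, p ≠ q → M p q = indP (Rtog G H p q ∧ p ∉ S₀ ∧ q ∉ S₀)) →
      mu M ≤ s →
      Disjoint B S₀ →
      (∀ u ∈ B, ∀ v ∈ B, u ≠ v → ¬ Reach H S₀ u v (2 * r + 2)) →
      fN t₀ s m ≤ B.card →
      ∃ S₁ B' : Finset (Fin n), S₁.card ≤ s * t₀ ∧ B' ⊆ B ∧ m ≤ B'.card ∧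
        Disjoint B' (S₀ ∪ S₁) ∧
        (∀ u ∈ B', ∀ v ∈ B', u ≠ v → ¬ Reach G (S₀ ∪ S₁) u v r) := by
  intro s
  induction s with
  | zero =>
    intro m S₀ B M hsymm hspec hmu hdisj hind hcard
    have hmu0 : mu M = 0 := Nat.le_zero.mp hmu
    have hagree : ∀ a b : Fin n, a ∉ (S₀ : Finset (Fin n)) → b ∉ S₀ → a ≠ b →
        (G.Adj a b ↔ H.Adj a b) := by
      intro a b ha hb hab
      have h0 : M a b = 0 := by rw [mu_zero_rows hmu0 a]; rfl
      have := (indP_eq_zero).mp (by rw [← hspec a b hab]; exact h0)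
      by_contra hniff
      exact this ⟨⟨hab, hniff⟩, ha, hb⟩
    refine ⟨∅, B, by simp, subset_refl B, ?_, by simpa using hdisj, ?_⟩
    · simpa [fN] using hcard
    · intro u hu v hv huv hreach
      rw [Finset.union_empty] at hreach
      exact hind u hu v hv huv
        ((walk_transfer hagree hreach).mono_len (by omega))
  | succ s ih =>
    intro m S₀ B M hsymm hspec hmu hdisj hind hcard
    set D₀ := (2 * t₀ - 1) * 2 ^ (s + 1) + 1 with hD₀
    have hram : ram D₀ m ≤ B.card := le_trans (le_max_left _ _) (by simpa [fN] using hcard)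
    have hrec : fN t₀ s m + t₀ ≤ B.card := le_trans (le_max_right _ _) (by simpa [fN] using hcard)
    rcases ram_spec D₀ m B (fun u v => Reach G S₀ u v r)
        (fun x y h => h.symm) hram with ⟨D, hDB, hDcard, hDcl⟩ | ⟨T, hTB, hTcard, hTfar⟩
    swap
    · -- far clique: done with no deletions
      refine ⟨∅, T, by simp, hTB, hTcard, ?_, ?_⟩
      · simpa using Finset.disjoint_of_subset_left hTB hdisj
      · intro u hu v hv huv hreach
        rw [Finset.union_empty] at hreach
        exact hTfar u hu v hv huv hreach
    · -- close clique: find a heavy row class and drop the rank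
      have hpow : 1 ≤ 2 ^ (s + 1) := Nat.one_le_two_pow
      have hD2 : 2 ≤ D.card := by
        have : 2 ≤ D₀ := by
          have : 1 ≤ (2 * t₀ - 1) * 2 ^ (s + 1) :=
            Nat.one_le_iff_ne_zero.mpr (Nat.mul_ne_zero (by omega) (by omega))
          omega
        omega
      -- cluster vertices
      have hex : ∀ u ∈ D, ∃ a, a ∉ S₀ ∧ Reach H S₀ u a r ∧
          ∃ b, b ∉ S₀ ∧ b ≠ a ∧ M a b = 1 := by
        intro u hu
        obtain ⟨v, hv, hvu⟩ := Finset.exists_mem_ne hD2 u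
        obtain ⟨p, hpsupp, hplen⟩ := hDcl u hu v hv (Ne.symm hvu)
        rcases walk_split (H := H) p hpsupp with ⟨q, hq, hql⟩ | ⟨a, b, htog, haS, hbS, j, hr, hj⟩
        · exact absurd (Reach.mono_len ⟨q, hq, hql.trans hplen⟩ (by omega))
            (hind u (hDB hu) v (hDB hv) (Ne.symm hvu))
        · refine ⟨a, haS, hr.mono_len (by omega), b, hbS, (Ne.symm htog.1), ?_⟩
          rw [hspec a b htog.1]
          exact indP_eq_one.mpr ⟨htog, haS, hbS⟩
      set c : Fin n → Fin n := fun u =>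
        if h : ∃ a, a ∉ S₀ ∧ Reach H S₀ u a r ∧ ∃ b, b ∉ S₀ ∧ b ≠ a ∧ M a b = 1
        then h.choose else u with hcdef
      have hcP : ∀ u ∈ D, (c u ∉ S₀ ∧ Reach H S₀ u (c u) r ∧
          ∃ b, b ∉ S₀ ∧ b ≠ c u ∧ M (c u) b = 1) := by
        intro u hu
        have h := hex u hu
        simp only [hcdef, dif_pos h]
        exact h.choose_spec
      have hinj : ∀ u ∈ D, ∀ v ∈ D, u ≠ v → c u ≠ c v := by
        intro u hu v hv huv hcc
        have h1 := (hcP u hu).2.1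
        have h2 := (hcP v hv).2.1
        rw [hcc] at h1
        exact hind u (hDB hu) v (hDB hv) huv ((h1.trans h2.symm).mono_len (by omega))
      -- pigeonhole on row types
      set σ : Fin n → (Fin n → ZMod 2) := fun u => M (c u) with hσdef
      have himg : (D.image σ).card * (2 * t₀ - 1) < D.card := by
        have h1 : (D.image σ).card ≤ 2 ^ (s + 1) := by
          refine le_trans (card_rows_le (M := M) (D.image σ) ?_) ?_
          · intro x hx
            obtain ⟨u, _, rfl⟩ := Finset.mem_image.mp hx
            exact ⟨c u, rfl⟩
          · exact Nat.pow_le_pow_right (by omega) hmu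
        calc (D.image σ).card * (2 * t₀ - 1) ≤ 2 ^ (s + 1) * (2 * t₀ - 1) :=
              Nat.mul_le_mul_right _ h1
          _ < D₀ := by rw [hD₀, Nat.mul_comm]; omega
          _ ≤ D.card := hDcard
      obtain ⟨row, -, hrow⟩ := Finset.exists_lt_card_fiber_of_mul_lt_card_of_maps_to
        (fun u hu => Finset.mem_image_of_mem σ hu) himg
      set Dr := D.filter (fun u => σ u = row) with hDrdef
      have hDr2t : 2 * t₀ ≤ Dr.card := by omega
      obtain ⟨Dt, hDtDr, hDtcard⟩ := Finset.exists_subset_card_eq hDr2t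
      have hDtD : Dt ⊆ D := hDtDr.trans (Finset.filter_subset _ _)
      have hrowEq : ∀ u ∈ Dt, M (c u) = row := by
        intro u hu
        exact (Finset.mem_filter.mp (hDtDr hu)).2
      set T := Dt.image c with hTdef
      have hTcard : T.card = 2 * t₀ := by
        rw [hTdef, Finset.card_image_of_injOn, hDtcard]
        intro u hu v hv huv
        by_contra hne
        exact hinj u (hDtD hu) v (hDtD hv) hne huv
      obtain ⟨u₀, hu₀⟩ := Finset.card_pos.mp (by omega : 0 < Dt.card)
      set cV := c u₀ with hcVdef
      have hcVT : cV ∈ T := Finset.mem_image_of_mem c hu₀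
      have hrowcV : M cV = row := hrowEq u₀ hu₀
      set δ := M cV cV with hδdef
      -- all pairs among T have entry δ
      have hTentry : ∀ a ∈ T, ∀ a' ∈ T, M a a' = δ := by
        intro a ha a' ha'
        obtain ⟨u, hu, rfl⟩ := Finset.mem_image.mp ha
        obtain ⟨u', hu', rfl⟩ := Finset.mem_image.mp ha'
        calc M (c u) (c u') = row (c u') := by rw [hrowEq u hu]
          _ = M cV (c u') := by rw [hrowcV]
          _ = M (c u') cV := hsymm _ _
          _ = row cV := by rw [hrowEq u' hu']
          _ = M cV cV := by rw [hrowcV]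
      -- distinct cluster points of T are never H-adjacent
      have hTnadjH : ∀ a ∈ T, ∀ a' ∈ T, a ≠ a' → ¬ H.Adj a a' := by
        intro a ha a' ha' hne hadj
        obtain ⟨u, hu, rfl⟩ := Finset.mem_image.mp ha
        obtain ⟨u', hu', rfl⟩ := Finset.mem_image.mp ha'
        have huu' : u ≠ u' := by rintro rfl; exact hne rfl
        have r1 := (hcP u (hDtD hu)).2.1
        have r2 := (hcP u' (hDtD hu')).2.1
        have hadj1 : Reach H S₀ (c u) (c u') 1 :=
          reach_adj hadj (hcP u (hDtD hu)).1 (hcP u' (hDtD hu')).1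
        exact hind u (hDB (hDtD hu)) u' (hDB (hDtD hu')) huu'
          (((r1.trans hadj1).trans r2.symm).mono_len (by omega))
      -- entries equal to one give G-adjacency off H
      have hOne : ∀ p q : Fin n, p ≠ q → M p q = 1 → ¬ H.Adj p q → G.Adj p q := by
        intro p q hpq h1 hnH
        have := indP_eq_one.mp (by rw [← hspec p q hpq]; exact h1)
        rcases this with ⟨⟨-, hniff⟩, -, -⟩
        by_contra hnG
        exact hniff ⟨fun hG => absurd hG hnG, fun hH => absurd hH hnH⟩
      -- δ must be zero, else T is a G-clique of size 2t₀, giving a biclique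
      have hδ0 : δ = 0 := by
        rcases zmod2_cases δ with h | h
        · exact h
        · exfalso
          obtain ⟨T1, hT1T, hT1card⟩ := Finset.exists_subset_card_eq
            (by omega : t₀ ≤ T.card)
          refine hbic ⟨T1, T \ T1, Finset.disjoint_sdiff, hT1card, ?_, ?_⟩
          · rw [Finset.card_sdiff_of_subset hT1T, hTcard, hT1card]; omega
          · intro x hx y hy
            have hyT : y ∈ T := (Finset.sdiff_subset) hy
            have hxy : x ≠ y := by
              rintro rfl
              exact (Finset.mem_sdiff.mp hy).2 hx
            exact hOne x y hxy (by rw [hTentry x (hT1T hx) y hyT]; exact h)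
              (hTnadjH x (hT1T hx) y hyT hxy)
      -- the support of the row of cV is small
      set Nc := Finset.univ.filter (fun w => w ≠ cV ∧ M cV w = 1) with hNcdef
      have hNcT : ∀ w ∈ Nc, w ∉ T := by
        intro w hw hwT
        obtain ⟨-, hw1⟩ := (Finset.mem_filter.mp hw).2
        rw [hTentry cV hcVT w hwT, hδ0] at hw1
        exact one_ne_zero hw1.symm
      have hNcsmall : Nc.card < t₀ := by
        by_contra hbig
        push_neg at hbig
        obtain ⟨W₀, hW₀Nc, hW₀card⟩ := Finset.exists_subset_card_eq hbig
        -- each w in W₀ is G-adjacent to all but at most one vertex of T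
        have hmiss : ∀ w ∈ W₀, (T.filter (fun a => ¬ G.Adj w a)).card ≤ 1 := by
          intro w hw
          rw [Finset.card_le_one]
          intro a ha a' ha'
          obtain ⟨haT, hanG⟩ := Finset.mem_filter.mp ha
          obtain ⟨haT', hanG'⟩ := Finset.mem_filter.mp ha'
          by_contra hne
          obtain ⟨hwNe, hw1⟩ := (Finset.mem_filter.mp (hW₀Nc hw)).2
          have hwa : ∀ b ∈ T, M w b = 1 := by
            intro b hbT
            obtain ⟨u, hu, rfl⟩ := Finset.mem_image.mp hbT
            calc M w (c u) = M (c u) w := hsymm _ _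
              _ = row w := by rw [hrowEq u hu]
              _ = M cV w := by rw [hrowcV]
              _ = 1 := hw1
          have hwne : ∀ b ∈ T, w ≠ b := by
            intro b hbT hwb
            apply hNcT w (hW₀Nc hw)
            rwa [hwb]
          -- w is H-adjacent to both a and a'
          have hH1 : H.Adj w a := by
            by_contra hnH
            exact hanG (hOne w a (hwne a haT) (hwa a haT) hnH)
          have hH2 : H.Adj w a' := by
            by_contra hnH
            exact hanG' (hOne w a' (hwne a' haT') (hwa a' haT') hnH)
          -- contradiction with independence
          obtain ⟨u, hu, rfl⟩ := Finset.mem_image.mp haT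
          obtain ⟨u', hu', rfl⟩ := Finset.mem_image.mp haT'
          have huu' : u ≠ u' := by rintro rfl; exact hne rfl
          have hwS : w ∉ S₀ := by
            obtain ⟨hwNe', hw1'⟩ := (Finset.mem_filter.mp (hW₀Nc hw)).2
            have := indP_eq_one.mp (by rw [← hspec cV w (Ne.symm hwNe')]; exact hw1')
            exact this.2.2
          have r1 := (hcP u (hDtD hu)).2.1
          have r2 := (hcP u' (hDtD hu')).2.1
          have hstep : Reach H S₀ (c u) (c u') 2 :=
            (reach_adj hH1.symm (hcP u (hDtD hu)).1 hwS).trans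
              (reach_adj hH2 hwS (hcP u' (hDtD hu')).1)
          exact hind u (hDB (hDtD hu)) u' (hDB (hDtD hu')) huu'
            (((r1.trans hstep).trans r2.symm).mono_len (by omega))
        -- build the biclique
        set Bad := W₀.biUnion (fun w => T.filter (fun a => ¬ G.Adj w a)) with hBaddef
        have hBadcard : Bad.card ≤ t₀ := by
          refine (Finset.card_biUnion_le).trans ?_
          calc (∑ w ∈ W₀, (T.filter (fun a => ¬ G.Adj w a)).card)
              ≤ ∑ w ∈ W₀, 1 := Finset.sum_le_sum hmiss
            _ = t₀ := by rw [Finset.sum_const, smul_eq_mul, hW₀card, mul_one]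
        have hTBad : t₀ ≤ (T \ Bad).card := by
          have := Finset.card_le_card_sdiff_add_card (s := T) (t := Bad)
          omega
        obtain ⟨T', hT'sub, hT'card⟩ := Finset.exists_subset_card_eq hTBad
        refine hbic ⟨W₀, T', ?_, hW₀card, hT'card, ?_⟩
        · rw [Finset.disjoint_left]
          intro w hw hwT'
          exact hNcT w (hW₀Nc hw) ((hT'sub.trans Finset.sdiff_subset) hwT')
        · intro w hw a ha
          have haTB := hT'sub ha
          rw [Finset.mem_sdiff] at haTB
          by_contra hnG
          exact haTB.2 (Finset.mem_biUnion.mpr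
            ⟨w, hw, Finset.mem_filter.mpr ⟨haTB.1, hnG⟩⟩)
      -- now delete S₁ and recurse
      set S₁ := insert cV Nc with hS₁def
      have hS₁card : S₁.card ≤ t₀ := by
        refine (Finset.card_insert_le _ _).trans ?_
        omega
      set M' : Fin n → Fin n → ZMod 2 :=
        fun p q => if p ∈ S₀ ∪ S₁ ∨ q ∈ S₀ ∪ S₁ then 0 else M p q with hM'def
      have hdrop : mu M' + 1 ≤ mu M := by
        refine mu_drop M (S₀ ∪ S₁) cV ?_ ?_ ?_
        · exact Finset.mem_union_right _ (Finset.mem_insert_self _ _)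
        · intro v hv
          rw [Finset.mem_union, not_or] at hv
          have hvNc : v ∉ Nc := fun h => hv.2 (Finset.mem_insert_of_mem h)
          have hvne : v ≠ cV := fun h => hv.2 (by rw [h]; exact Finset.mem_insert_self _ _)
          rcases zmod2_cases (M cV v) with h | h
          · exact h
          · exact absurd (Finset.mem_filter.mpr ⟨Finset.mem_univ v, hvne, h⟩) hvNc
        · obtain ⟨b, hbS, hbne, hb1⟩ := (hcP u₀ (hDtD hu₀)).2.2
          intro h0
          exact one_ne_zero (hb1.symm.trans (congrFun h0 b))
      have hmu' : mu M' ≤ s := by omega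
      have hsymm' : ∀ p q, M' p q = M' q p := by
        intro p q
        simp only [hM'def]
        by_cases h : p ∈ S₀ ∪ S₁ ∨ q ∈ S₀ ∪ S₁
        · rw [if_pos h, if_pos h.symm]
        · rw [if_neg h, if_neg (fun hc => h hc.symm)]
          exact hsymm p q
      have hspec' : ∀ p q, p ≠ q →
          M' p q = indP (Rtog G H p q ∧ p ∉ S₀ ∪ S₁ ∧ q ∉ S₀ ∪ S₁) := by
        intro p q hpq
        simp only [hM'def]
        by_cases h : p ∈ S₀ ∪ S₁ ∨ q ∈ S₀ ∪ S₁
        · rw [if_pos h]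
          symm
          rw [indP_eq_zero]
          rintro ⟨-, hp, hq⟩
          rcases h with h | h
          · exact hp h
          · exact hq h
        · rw [if_neg h]
          push_neg at h
          rw [hspec p q hpq]
          apply indP_congr
          constructor
          · rintro ⟨ht, -, -⟩
            exact ⟨ht, h.1, h.2⟩
          · rintro ⟨ht, -, -⟩
            exact ⟨ht, fun hpS => h.1 (Finset.mem_union_left _ hpS),
              fun hqS => h.2 (Finset.mem_union_left _ hqS)⟩
      have hdisj' : Disjoint (B \ S₁) (S₀ ∪ S₁) := by
        rw [Finset.disjoint_union_right]
        exact ⟨Finset.disjoint_of_subset_left Finset.sdiff_subset hdisj,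
          Finset.sdiff_disjoint⟩
      have hind' : ∀ u ∈ B \ S₁, ∀ v ∈ B \ S₁, u ≠ v →
          ¬ Reach H (S₀ ∪ S₁) u v (2 * r + 2) := by
        intro u hu v hv huv hr
        exact hind u (Finset.sdiff_subset hu) v (Finset.sdiff_subset hv) huv
          (hr.anti_set Finset.subset_union_left)
      have hcard' : fN t₀ s m ≤ (B \ S₁).card := by
        have := Finset.card_le_card_sdiff_add_card (s := B) (t := S₁)
        omega
      obtain ⟨S₂, B', hS₂card, hB'sub, hB'card, hB'disj, hB'reach⟩ :=
        ih m (S₀ ∪ S₁) (B \ S₁) M' hsymm' hspec' hmu' hdisj' hind' hcard'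
      refine ⟨S₁ ∪ S₂, B', ?_, hB'sub.trans Finset.sdiff_subset, hB'card, ?_, ?_⟩
      · calc (S₁ ∪ S₂).card ≤ S₁.card + S₂.card := Finset.card_union_le _ _
          _ ≤ t₀ + s * t₀ := by omega
          _ = (s + 1) * t₀ := by ring
      · rwa [← Finset.union_assoc]
      · intro u hu v hv huv hr
        exact hB'reach u hu v hv huv (by rwa [← Finset.union_assoc] at hr)

end Core

/-- The main induction: a class that is weakly sparse with parameter `t₀` (with
`t₀² + t₀ - 2 ≥ 8t₀`) and strongly flip-flat with flip-number `k` is uniformly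
almost-wide with constant `k(t₀² + t₀ - 2)`. -/
theorem sff_weaklySparse_implies_uaw (C : ∀ n : ℕ, SimpleGraph (Fin n) → Prop)
    (t₀ k : ℕ) (N : ℕ → ℕ → ℕ) (ht₀ : 0 < t₀) (hbig : 8 * t₀ ≤ t₀ ^ 2 + t₀ - 2)
    (hws : ∀ (n : ℕ) (G : SimpleGraph (Fin n)), C n G → ¬ HasBiclique G t₀)
    (hsff : SFF C k N) :
    ∃ N' : ℕ → ℕ → ℕ, UAW C (k * (t₀ ^ 2 + t₀ - 2)) N' := by
  classical
  have h2 : 2 ≤ t₀ ^ 2 + t₀ := by nlinarith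
  have h3 : 8 * t₀ + 2 ≤ t₀ ^ 2 + t₀ := by omega
  have ht8 : 8 ≤ t₀ := by
    by_contra h
    push_neg at h
    have : t₀ ^ 2 ≤ 7 * t₀ := by
      rw [pow_two]
      exact Nat.mul_le_mul_right _ (by omega)
    omega
  refine ⟨fun r m => N (2 * r + 2) (fN t₀ (3 * k) m), ?_⟩
  intro r m n G hG A hA
  obtain ⟨L, hLlen, B₀, hB₀A, hB₀card, hB₀ind⟩ := hsff (2 * r + 2) (fN t₀ (3 * k) m) n G hG A hA
  set H := gflipAll G L with hHdef
  have hspec : ∀ p q : Fin n, p ≠ q →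
      sumT L p q = indP (Rtog G H p q ∧ p ∉ (∅ : Finset (Fin n)) ∧ q ∉ (∅ : Finset (Fin n))) := by
    intro p q hpq
    rw [sumT_spec L G p q hpq]
    exact indP_congr (by simp [hHdef])
  have hmu : mu (sumT L) ≤ 3 * k :=
    (mu_sumT_le L).trans (Nat.mul_le_mul_left 3 hLlen)
  have hind : ∀ u ∈ B₀, ∀ v ∈ B₀, u ≠ v → ¬ Reach H (∅ : Finset (Fin n)) u v (2 * r + 2) := by
    intro u hu v hv huv ⟨p, _, hlen⟩
    exact absurd hlen (not_le.mpr (hB₀ind u (by simpa using hu) v (by simpa using hv) huv p))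
  obtain ⟨S₁, B', hS₁card, hB'sub, hB'card, hB'disj, hB'reach⟩ :=
    core G H t₀ r ht8 (hws n G hG) (3 * k) m ∅ B₀ (sumT L)
      (sumT_symm L) hspec hmu (by simp) hind hB₀card
  refine ⟨S₁, ?_, B', hB'sub.trans hB₀A, hB'card, ?_, ?_⟩
  · refine hS₁card.trans ?_
    calc 3 * k * t₀ = k * (3 * t₀) := by ring
      _ ≤ k * (t₀ ^ 2 + t₀ - 2) := Nat.mul_le_mul_left k (by omega)
  · simpa using hB'disj
  · intro u hu v hv huv p hp
    by_contra hle
    push_neg at hle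
    refine hB'reach u (by simpa using hu) v (by simpa using hv) huv ⟨p, ?_, hle⟩
    intro x hx
    simpa using hp x hx
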